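/- Let G be a finite simple graph and let V_1, …, V_k be a partition of V(G) such that for every i ∈ {1, …, k} the subgraph of G induced by V_i is a D graph for the Maker–Breaker total domination game. Then G is a D graph. -/
import Mathlib


namespace MBTD

variable {V : Type*} [Fintype V] [DecidableEq V]

/-- `a` is a total dominating set of `G`: every vertex has a neighbour in `a`. -/
def IsTotalDomSet (G : SimpleGraph V) (a : Finset V) : Prop :=
  ∀ v : V, ∃ u ∈ a, G.Adj u v

/-- `WinsAux win n turn a b` describes the generic positional game in which two players
alternately claim previously unclaimed vertices until every vertex is claimed.
Here `a` is the set of vertices claimed so far by the tracked player, `b` the set claimed by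
the opponent, `turn = true` iff the tracked player is the next to move, and `n` is the number
of moves still to be played.  The tracked player wins iff `win` holds of the final position. -/
def WinsAux (win : Finset V → Finset V → Prop) : ℕ → Bool → Finset V → Finset V → Prop
  | 0, _, a, b => win a b
  | n + 1, true, a, b => ∃ v ∈ Finset.univ \ (a ∪ b), WinsAux win n false (insert v a) b
  | n + 1, false, a, b => ∀ v ∈ Finset.univ \ (a ∪ b), WinsAux win n true a (insert v b)

/-- Dominator has a winning strategy in the Maker-Breaker total domination game on `G`,
where `dFirst = true` means Dominator moves first (the D-game) and `dFirst = false` means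
Staller moves first (the S-game).  Dominator wins iff the set of vertices he has claimed at
the end of the game is a total dominating set of `G`. -/
def DominatorWinsMBTD (G : SimpleGraph V) (dFirst : Bool) : Prop :=
  WinsAux (fun a _ => IsTotalDomSet G a) (Fintype.card V) dFirst ∅ ∅

/-- Staller has a winning strategy in the Maker-Breaker total domination game on `G`,
where `dFirst = true` means Dominator moves first (the D-game) and `dFirst = false` means
Staller moves first (the S-game).  Staller wins iff she claims every vertex of the open
neighbourhood of some vertex. -/
def StallerWinsMBTD (G : SimpleGraph V) (dFirst : Bool) : Prop :=
  WinsAux (fun a _ => ∃ v : V, ∀ u : V, G.Adj u v → u ∈ a) (Fintype.card V) (!dFirst) ∅ ∅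

/-- `G` is a `𝒟` graph: Dominator wins both the D-game and the S-game. -/
def IsD (G : SimpleGraph V) : Prop :=
  DominatorWinsMBTD G true ∧ DominatorWinsMBTD G false

/-- `G` is an `𝒮` graph: Staller wins both the D-game and the S-game. -/
def IsS (G : SimpleGraph V) : Prop :=
  StallerWinsMBTD G true ∧ StallerWinsMBTD G false

/-- `G` is an `𝒩` graph: whichever player moves first wins. -/
def IsN (G : SimpleGraph V) : Prop :=
  DominatorWinsMBTD G true ∧ StallerWinsMBTD G false

/-- Restricted game on board `S` with Maker's win condition `w`. -/
def WinsOn (w : Finset V → Prop) (S : Finset V) : ℕ → Bool → Finset V → Finset V → Prop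
  | 0, _, a, _ => w a
  | n + 1, true, a, b => ∃ v ∈ S \ (a ∪ b), WinsOn w S n false (insert v a) b
  | n + 1, false, a, b => ∀ v ∈ S \ (a ∪ b), WinsOn w S n true a (insert v b)

lemma transfer {s : Finset V}
    {win : Finset (↑s : Set V) → Finset (↑s : Set V) → Prop} {w : Finset V → Prop}
    (hw : ∀ A B, win A B → w (A.map (Function.Embedding.subtype _))) :
    ∀ (n : ℕ) (t : Bool) (A B : Finset (↑s : Set V)), WinsAux win n t A B →
      WinsOn w s n t (A.map (Function.Embedding.subtype _))
        (B.map (Function.Embedding.subtype _)) := by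
  intro n
  induction n with
  | zero => intro t A B h; exact hw A B h
  | succ n ih =>
    intro t A B h
    cases t with
    | true =>
      obtain ⟨v, hv, h⟩ := h
      refine ⟨v.1, ?_, ?_⟩
      · simp only [Finset.mem_sdiff, Finset.mem_union, Finset.mem_univ, true_and] at hv
        refine Finset.mem_sdiff.mpr ⟨v.2, fun hmem => ?_⟩
        rcases Finset.mem_union.mp hmem with h1 | h1
        · exact hv (Or.inl ((Finset.mem_map' _).mp h1))
        · exact hv (Or.inr ((Finset.mem_map' _).mp h1))
      · have := ih false (insert v A) B h
        simpa [Finset.map_insert] using this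
    | false =>
      intro u hu
      simp only [Finset.mem_sdiff, Finset.mem_union] at hu
      have hus : u ∈ (↑s : Set V) := hu.1
      have hu' : (⟨u, hus⟩ : (↑s : Set V)) ∈ Finset.univ \ (A ∪ B) := by
        simp only [Finset.mem_sdiff, Finset.mem_union, Finset.mem_univ, true_and]
        intro hmem
        apply hu.2
        rcases hmem with hmem | hmem
        · exact Or.inl (Finset.mem_map_of_mem _ hmem)
        · exact Or.inr (Finset.mem_map_of_mem _ hmem)
      have := ih true A (insert ⟨u, hus⟩ B) (h _ hu')
      simpa [Finset.map_insert] using this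

/-- The part-win condition at the level of `V`. -/
def PW (G : SimpleGraph V) (s : Finset V) (a : Finset V) : Prop :=
  ∀ v ∈ s, ∃ u ∈ a, u ∈ s ∧ G.Adj u v

/-- Dominator's responder-winning predicate for a part, with canonical fuel. -/
def Resp (G : SimpleGraph V) (s A B : Finset V) : Prop :=
  WinsOn (PW G s) s ((s \ (A ∪ B)).card) false A B

lemma part_resp (G : SimpleGraph V) (s : Finset V)
    (h : DominatorWinsMBTD (G.induce (↑s : Set V)) false) : Resp G s ∅ ∅ := by
  have hw : ∀ A B : Finset (↑s : Set V), IsTotalDomSet (G.induce (↑s : Set V)) A →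
      PW G s (A.map (Function.Embedding.subtype _)) := by
    intro A B hA v hv
    obtain ⟨u, huA, hadj⟩ := hA ⟨v, hv⟩
    exact ⟨u.1, Finset.mem_map_of_mem _ huA, u.2, hadj⟩
  have h2 := transfer hw (Fintype.card (↑s : Set V)) false ∅ ∅ h
  have hcard : Fintype.card (↑s : Set V) = s.card := by simp
  rw [hcard] at h2
  simpa [Resp] using h2

lemma card_sdiff_insert' {s t : Finset V} {v : V} (hv : v ∈ s \ t) :
    (s \ insert v t).card + 1 = (s \ t).card := by
  rw [Finset.sdiff_insert, Finset.card_erase_add_one hv]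

lemma winsOn_final {w : Finset V → Prop} {S : Finset V} :
    ∀ (n : ℕ) (t : Bool) (a b : Finset V), n = (S \ (a ∪ b)).card → WinsOn w S n t a b →
      ∃ F, F ⊆ a ∪ (S \ (a ∪ b)) ∧ w F := by
  intro n
  induction n with
  | zero => intro t a b _ h; exact ⟨a, Finset.subset_union_left, h⟩
  | succ n ih =>
    intro t a b hn h
    cases t with
    | true =>
      obtain ⟨v, hv, h⟩ := h
      have heq : insert v a ∪ b = insert v (a ∪ b) := Finset.insert_union _ _ _
      have h2 := card_sdiff_insert' (s := S) hv
      have hfuel : n = (S \ (insert v a ∪ b)).card := by rw [heq]; omega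
      obtain ⟨F, hF, hwF⟩ := ih false (insert v a) b hfuel h
      refine ⟨F, fun x hx => ?_, hwF⟩
      rcases Finset.mem_union.mp (hF hx) with h1 | h1
      · rcases Finset.mem_insert.mp h1 with rfl | h1
        · exact Finset.mem_union_right _ hv
        · exact Finset.mem_union_left _ h1
      · refine Finset.mem_union_right _ ?_
        simp only [Finset.mem_sdiff, Finset.mem_union, Finset.mem_insert] at h1 ⊢
        tauto
    | false =>
      have hne : (S \ (a ∪ b)).Nonempty := Finset.card_pos.mp (by omega)
      obtain ⟨v, hv⟩ := hne
      have heq : a ∪ insert v b = insert v (a ∪ b) := Finset.union_insert _ _ _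
      have h2 := card_sdiff_insert' (s := S) hv
      have hfuel : n = (S \ (a ∪ insert v b)).card := by rw [heq]; omega
      obtain ⟨F, hF, hwF⟩ := ih true a (insert v b) hfuel (h v hv)
      refine ⟨F, fun x hx => ?_, hwF⟩
      rcases Finset.mem_union.mp (hF hx) with h1 | h1
      · exact Finset.mem_union_left _ h1
      · refine Finset.mem_union_right _ ?_
        simp only [Finset.mem_sdiff, Finset.mem_union, Finset.mem_insert] at h1 ⊢
        tauto

lemma resp_step {G : SimpleGraph V} {s A B : Finset V} {v : V}
    (hv : v ∈ s \ (A ∪ B)) (h : Resp G s A B) :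
    (s \ (A ∪ insert v B) = ∅ ∧ Resp G s A (insert v B)) ∨
      ∃ u ∈ s \ (A ∪ insert v B), Resp G s (insert u A) (insert v B) := by
  have heq : A ∪ insert v B = insert v (A ∪ B) := Finset.union_insert _ _ _
  have hsets : s \ (A ∪ insert v B) = s \ insert v (A ∪ B) := by rw [heq]
  have h2 := card_sdiff_insert' (s := s) hv
  unfold Resp at h
  rw [← h2] at h
  have h3 := h v hv
  rcases hm : (s \ insert v (A ∪ B)).card with _ | l
  · rw [hm] at h3
    left
    constructor
    · rw [hsets]; exact Finset.card_eq_zero.mp hm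
    · unfold Resp; rw [hsets, hm]; exact h3
  · rw [hm] at h3
    obtain ⟨u, hu, h4⟩ := h3
    right
    refine ⟨u, hu, ?_⟩
    unfold Resp
    have h5 := card_sdiff_insert' (s := s) (t := A ∪ insert v B) hu
    have heq2 : insert u A ∪ insert v B = insert u (A ∪ insert v B) := Finset.insert_union _ _ _
    have hfuel : (s \ (insert u A ∪ insert v B)).card = l := by
      rw [heq2]
      have hc : (s \ (A ∪ insert v B)).card = l + 1 := by rw [hsets, hm]
      omega
    rw [hfuel]
    exact h4

lemma final_win (G : SimpleGraph V) {k : ℕ} (P : Fin k → Finset V)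
    (hcover : ∀ v : V, ∃ i, v ∈ P i) (a b : Finset V)
    (hfull : ∀ x : V, x ∈ a ∪ b)
    (hinv : ∀ i, ∃ A, A ⊆ a ∩ P i ∧ Resp G (P i) A (b ∩ P i)) :
    IsTotalDomSet G a := by
  intro v
  obtain ⟨j, hj⟩ := hcover v
  obtain ⟨A, hA, hR⟩ := hinv j
  obtain ⟨F, hF, hw⟩ := winsOn_final _ false A (b ∩ P j) rfl hR
  obtain ⟨u, huF, hus, hadj⟩ := hw v hj
  refine ⟨u, ?_, hadj⟩
  rcases Finset.mem_union.mp (hF huF) with h1 | h1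
  · exact (Finset.mem_inter.mp (hA h1)).1
  · simp only [Finset.mem_sdiff, Finset.mem_union, Finset.mem_inter] at h1
    rcases Finset.mem_union.mp (hfull u) with h2 | h2
    · exact h2
    · exact absurd (Or.inr ⟨h2, h1.1⟩) h1.2

lemma main_lemma (G : SimpleGraph V) {k : ℕ} (P : Fin k → Finset V)
    (hdisj : ∀ i j, i ≠ j → Disjoint (P i) (P j))
    (hcover : ∀ v : V, ∃ i, v ∈ P i) :
    ∀ n : ℕ,
      (∀ a b : Finset V, n = (Finset.univ \ (a ∪ b)).card →
        (∀ i, ∃ A, A ⊆ a ∩ P i ∧ Resp G (P i) A (b ∩ P i)) →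
        WinsAux (fun a _ => IsTotalDomSet G a) n false a b) ∧
      (∀ (u : V) (a b : Finset V), n = (Finset.univ \ (a ∪ b)).card → u ∉ b →
        (∀ i, ∃ A, A ⊆ insert u a ∩ P i ∧ Resp G (P i) A (b ∩ P i)) →
        WinsAux (fun a _ => IsTotalDomSet G a) n true a b) := by
  intro n
  induction n with
  | zero =>
    constructor
    · intro a b hn hinv
      have hfull : ∀ x : V, x ∈ a ∪ b := by
        intro x
        by_contra hx
        have : x ∈ Finset.univ \ (a ∪ b) := Finset.mem_sdiff.mpr ⟨Finset.mem_univ x, hx⟩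
        have := Finset.card_eq_zero.mp hn.symm
        simp [this] at *
      exact final_win G P hcover a b hfull hinv
    · intro u a b hn hu hinv
      have hfull : ∀ x : V, x ∈ a ∪ b := by
        intro x
        by_contra hx
        have : x ∈ Finset.univ \ (a ∪ b) := Finset.mem_sdiff.mpr ⟨Finset.mem_univ x, hx⟩
        have := Finset.card_eq_zero.mp hn.symm
        simp [this] at *
      have hua : u ∈ a := by
        rcases Finset.mem_union.mp (hfull u) with h | h
        · exact h
        · exact absurd h hu
      rw [Finset.insert_eq_self.mpr hua] at hinv
      exact final_win G P hcover a b hfull hinv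
  | succ n ih =>
    obtain ⟨ihF, ihT⟩ := ih
    constructor
    · -- Staller to move
      intro a b hn hinv
      intro v hv
      have hv' := Finset.mem_sdiff.mp hv
      have hvab : v ∉ a ∪ b := hv'.2
      obtain ⟨j, hj⟩ := hcover v
      have heq : a ∪ insert v b = insert v (a ∪ b) := Finset.union_insert _ _ _
      have h2 := card_sdiff_insert' (s := (Finset.univ : Finset V)) hv
      have hn' : n = (Finset.univ \ (a ∪ insert v b)).card := by rw [heq]; omega
      have hbj : insert v b ∩ P j = insert v (b ∩ P j) := by
        rw [Finset.insert_inter_of_mem hj]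
      have hbi : ∀ i, i ≠ j → insert v b ∩ P i = b ∩ P i := by
        intro i hij
        have hvi : v ∉ P i := fun hmem =>
          Finset.notMem_empty v (by
            have := (hdisj j i (fun h => hij h.symm)).le_bot (Finset.mem_inter.mpr ⟨hj, hmem⟩)
            simpa using this)
        rw [Finset.insert_inter_of_notMem hvi]
      obtain ⟨A, hA, hR⟩ := hinv j
      have hvmem : v ∈ P j \ (A ∪ b ∩ P j) := by
        simp only [Finset.mem_sdiff, Finset.mem_union, Finset.mem_inter]
        refine ⟨hj, fun hmem => ?_⟩
        rcases hmem with h | h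
        · exact hvab (Finset.mem_union_left _ (Finset.mem_inter.mp (hA h)).1)
        · exact hvab (Finset.mem_union_right _ h.1)
      rcases resp_step hvmem hR with ⟨_, hR'⟩ | ⟨u, hu, hR'⟩
      · -- part j is now full
        have hinv' : ∀ i, ∃ A, A ⊆ a ∩ P i ∧ Resp G (P i) A (insert v b ∩ P i) := by
          intro i
          by_cases hij : i = j
          · subst hij
            exact ⟨A, hA, by rw [hbj]; exact hR'⟩
          · obtain ⟨A', hA', hR''⟩ := hinv i
            exact ⟨A', hA', by rw [hbi i hij]; exact hR''⟩
        rcases Nat.eq_zero_or_pos n with rfl | hpos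
        · show IsTotalDomSet G a
          have hfull : ∀ x : V, x ∈ a ∪ insert v b := by
            intro x
            by_contra hx
            have hx' : x ∈ Finset.univ \ (a ∪ insert v b) :=
              Finset.mem_sdiff.mpr ⟨Finset.mem_univ x, hx⟩
            rw [Finset.card_eq_zero.mp hn'.symm] at hx'
            exact absurd hx' (Finset.notMem_empty x)
          exact final_win G P hcover a (insert v b) hfull hinv'
        · have hne : (Finset.univ \ (a ∪ insert v b)).Nonempty :=
            Finset.card_pos.mp (by omega)
          obtain ⟨w, hw⟩ := hne
          have hwb : w ∉ insert v b := fun hmem =>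
            (Finset.mem_sdiff.mp hw).2 (Finset.mem_union_right _ hmem)
          refine ihT w a (insert v b) hn' hwb ?_
          intro i
          obtain ⟨A', hA', hR''⟩ := hinv' i
          exact ⟨A', hA'.trans (Finset.inter_subset_inter (Finset.subset_insert _ _)
            (le_refl _)), hR''⟩
      · -- Dominator has an imagined reply u in part j
        have huP : u ∈ P j := (Finset.mem_sdiff.mp hu).1
        have hunotin : u ∉ A ∪ insert v (b ∩ P j) := (Finset.mem_sdiff.mp hu).2
        have hub' : u ∉ insert v b := by
          intro hmem
          rcases Finset.mem_insert.mp hmem with rfl | hmem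
          · exact hunotin (Finset.mem_union_right _ (Finset.mem_insert_self _ _))
          · exact hunotin (Finset.mem_union_right _
              (Finset.mem_insert_of_mem (Finset.mem_inter.mpr ⟨hmem, huP⟩)))
        refine ihT u a (insert v b) hn' hub' ?_
        intro i
        by_cases hij : i = j
        · subst hij
          refine ⟨insert u A, ?_, by rw [hbj]; exact hR'⟩
          intro x hx
          rcases Finset.mem_insert.mp hx with rfl | hx
          · exact Finset.mem_inter.mpr ⟨Finset.mem_insert_self _ _, huP⟩
          · have := Finset.mem_inter.mp (hA hx)
            exact Finset.mem_inter.mpr ⟨Finset.mem_insert_of_mem this.1, this.2⟩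
        · obtain ⟨A', hA', hR''⟩ := hinv i
          refine ⟨A', hA'.trans (Finset.inter_subset_inter (Finset.subset_insert _ _)
            (le_refl _)), by rw [hbi i hij]; exact hR''⟩
    · -- Dominator to move, possibly with pending vertex u
      intro u a b hn hu hinv
      by_cases hua : u ∈ a
      · rw [Finset.insert_eq_self.mpr hua] at hinv
        have hne : (Finset.univ \ (a ∪ b)).Nonempty := Finset.card_pos.mp (by omega)
        obtain ⟨w, hw⟩ := hne
        have heq : insert w a ∪ b = insert w (a ∪ b) := Finset.insert_union _ _ _
        have h2 := card_sdiff_insert' (s := (Finset.univ : Finset V)) hw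
        have hn' : n = (Finset.univ \ (insert w a ∪ b)).card := by rw [heq]; omega
        refine ⟨w, hw, ihF (insert w a) b hn' ?_⟩
        intro i
        obtain ⟨A', hA', hR''⟩ := hinv i
        exact ⟨A', hA'.trans (Finset.inter_subset_inter (Finset.subset_insert _ _)
          (le_refl _)), hR''⟩
      · have hw : u ∈ Finset.univ \ (a ∪ b) := by
          simp only [Finset.mem_sdiff, Finset.mem_union, Finset.mem_univ, true_and]
          tauto
        have heq : insert u a ∪ b = insert u (a ∪ b) := Finset.insert_union _ _ _
        have h2 := card_sdiff_insert' (s := (Finset.univ : Finset V)) hw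
        have hn' : n = (Finset.univ \ (insert u a ∪ b)).card := by rw [heq]; omega
        exact ⟨u, hw, ihF (insert u a) b hn' hinv⟩

/-- if `V(G)` is partitioned into parts each of which induces a `𝒟` graph,
then `G` is a `𝒟` graph. -/
theorem stmt1 {V : Type*} [Fintype V] [DecidableEq V] (G : SimpleGraph V)
    (k : ℕ) (P : Fin k → Finset V)
    (hne : ∀ i, (P i).Nonempty)
    (hdisj : ∀ i j, i ≠ j → Disjoint (P i) (P j))
    (hcover : ∀ v : V, ∃ i, v ∈ P i)
    (hD : ∀ i, IsD (G.induce (↑(P i) : Set V))) :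
    IsD G := by
  have hResp : ∀ i, Resp G (P i) ∅ (∅ ∩ P i) := by
    intro i
    rw [Finset.empty_inter]
    exact part_resp G (P i) (hD i).2
  have hn0 : Fintype.card V = (Finset.univ \ ((∅ : Finset V) ∪ ∅)).card := by simp
  constructor
  · show WinsAux (fun a _ => IsTotalDomSet G a) (Fintype.card V) true ∅ ∅
    rcases isEmpty_or_nonempty V with hV | hV
    · have hc : Fintype.card V = 0 := Fintype.card_eq_zero
      rw [hc]
      intro v
      exact (IsEmpty.false v).elim
    · obtain ⟨u⟩ := hV
      refine (main_lemma G P hdisj hcover (Fintype.card V)).2 u ∅ ∅ hn0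
        (Finset.notMem_empty u) ?_
      intro i
      exact ⟨∅, Finset.empty_subset _, hResp i⟩
  · show WinsAux (fun a _ => IsTotalDomSet G a) (Fintype.card V) false ∅ ∅
    refine (main_lemma G P hdisj hcover (Fintype.card V)).1 ∅ ∅ hn0 ?_
    intro i
    exact ⟨∅, Finset.empty_subset _, hResp i⟩

end MBTD
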